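/- Lower bound on window diversity combining both bounds: for any f : ZMod n → ZMod n, the counter-assisted generator x_i = f(x_{i-1}) + i is max(γ(k), η(k))-diverse, where γ(k) = √(k−1) for k ≤ n and √n for k > n, and η(k) = k/|Im f| for k ≤ n and n/|Im f| for k > n; i.e., every length-k window of every state sequence contains at least max(γ(k), η(k)) distinct values. -/

import Mathlib

/-- Combined diversity lower bound. For any `f : ZMod n → ZMod n`, the
counter-assisted generator `x_i = f (x_{i-1}) + i` is `max (γ k) (η k)`-diverse, where
`γ k = √(k-1)` for `k ≤ n` and `√n` for `k > n`, and `η k = k / |Im f|` for `k ≤ n` and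
`n / |Im f|` for `k > n`: every length-`k` window (starting at a position `i ≥ 1`) of
every state sequence contains `ν` distinct values with `ν² ≥ k - 1` and `ν·|Im f| ≥ k`
when `k ≤ n`, and `ν² ≥ n` and `ν·|Im f| ≥ n` when `k > n`. -/
theorem stmt_18 (n : ℕ) (hn : 2 ≤ n) [NeZero n] (f : ZMod n → ZMod n)
    (s : ZMod n) (x : ℕ → ZMod n) (hx0 : x 0 = s)
    (hx : ∀ i, x (i + 1) = f (x i) + ((i + 1 : ℕ) : ZMod n))
    (i : ℕ) (hi : 1 ≤ i) (k : ℕ) (hk : 1 ≤ k) :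
    (k ≤ n →
      k - 1 ≤ ((Finset.range k).image (fun j => x (i + j))).card ^ 2 ∧
      k ≤ ((Finset.range k).image (fun j => x (i + j))).card *
          (Finset.univ.image f).card) ∧
    (n < k →
      n ≤ ((Finset.range k).image (fun j => x (i + j))).card ^ 2 ∧
      n ≤ ((Finset.range k).image (fun j => x (i + j))).card *
          (Finset.univ.image f).card) := by
  obtain ⟨i', rfl⟩ : ∃ i', i = i' + 1 := ⟨i - 1, (Nat.succ_pred_eq_of_pos hi).symm⟩
  set W := (Finset.range k).image (fun j => x (i' + 1 + j)) with hW
  set F := (Finset.univ.image f) with hF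
  have hxmem : ∀ j, j < k → x (i' + 1 + j) ∈ W := fun j hj =>
    Finset.mem_image.mpr ⟨j, Finset.mem_range.mpr hj, rfl⟩
  have castinj : ∀ a b : ℕ, a < n → b < n → ((a : ZMod n) = b) → a = b := by
    intro a b ha hb h
    have := congrArg ZMod.val h
    rwa [ZMod.val_cast_of_lt ha, ZMod.val_cast_of_lt hb] at this
  have keyA : ∀ t, t ≤ n → t + 1 ≤ k → t ≤ W.card ^ 2 := by
    intro t htn htk
    have hcard := Finset.card_le_card_of_injOn
      (f := fun j => (x (i' + 1 + j), x (i' + 1 + (j + 1))))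
      (s := Finset.range t) (t := W ×ˢ W)
      (by
        intro j hj
        rw [Finset.mem_coe, Finset.mem_range] at hj
        exact Finset.mem_product.mpr ⟨hxmem j (by omega), hxmem (j + 1) (by omega)⟩)
      (by
        intro j hj j' hj' hjj
        rw [Finset.mem_coe, Finset.mem_range] at hj hj'
        simp only [Prod.mk.injEq] at hjj
        obtain ⟨h1, h2⟩ := hjj
        have e1 : i' + 1 + (j + 1) = (i' + 1 + j) + 1 := by omega
        have e2 : i' + 1 + (j' + 1) = (i' + 1 + j') + 1 := by omega
        rw [e1, hx (i' + 1 + j), e2, hx (i' + 1 + j'), h1] at h2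
        have h3 := add_left_cancel h2
        have h4 : ((j : ZMod n)) = (j' : ZMod n) := by
          have : ((i' + 1 + j + 1 : ℕ) : ZMod n) = ((i' + 1 + j' + 1 : ℕ) : ZMod n) := h3
          push_cast at this
          linear_combination this
        exact castinj j j' (by omega) (by omega) h4)
    rw [Finset.card_range, Finset.card_product] at hcard
    calc t ≤ W.card * W.card := hcard
      _ = W.card ^ 2 := (sq W.card).symm
  have keyB : ∀ t, t ≤ n → t ≤ k → t ≤ W.card * F.card := by
    intro t htn htk
    have hcard := Finset.card_le_card_of_injOn
      (f := fun j => (x (i' + 1 + j), f (x (i' + j))))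
      (s := Finset.range t) (t := W ×ˢ F)
      (by
        intro j hj
        rw [Finset.mem_coe, Finset.mem_range] at hj
        exact Finset.mem_product.mpr ⟨hxmem j (by omega),
          Finset.mem_image.mpr ⟨x (i' + j), Finset.mem_univ _, rfl⟩⟩)
      (by
        intro j hj j' hj' hjj
        rw [Finset.mem_coe, Finset.mem_range] at hj hj'
        simp only [Prod.mk.injEq] at hjj
        obtain ⟨h1, h2⟩ := hjj
        have e1 : i' + 1 + j = (i' + j) + 1 := by omega
        have e2 : i' + 1 + j' = (i' + j') + 1 := by omega
        rw [e1, hx (i' + j), e2, hx (i' + j'), h2] at h1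
        have h3 := add_left_cancel h1
        have h4 : ((j : ZMod n)) = (j' : ZMod n) := by
          have : ((i' + j + 1 : ℕ) : ZMod n) = ((i' + j' + 1 : ℕ) : ZMod n) := h3
          push_cast at this
          linear_combination this
        exact castinj j j' (by omega) (by omega) h4)
    rw [Finset.card_range, Finset.card_product] at hcard
    exact hcard
  constructor
  · intro hkn
    exact ⟨keyA (k - 1) (by omega) (by omega), keyB k hkn le_rfl⟩
  · intro hnk
    exact ⟨keyA n le_rfl (by omega), keyB n le_rfl (by omega)⟩
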